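/- arXiv:1909.10646 — 2 statements merged into one kernel-verified Lean document; each statement's English description precedes it below -/
import Mathlib

section
/- Let X be a Tychonoff cut-point space such that βX is a continuum irreducible between two points p and q. Then every indecomposable subcontinuum of βX is nowhere dense in βX. -/
open Set Topology

section Helpers

variable {Z : Type*} [TopologicalSpace Z]

/-- The image under `Subtype.val` of a closed subset of (the subtype of) a closed set
is closed. -/
lemma aux_img_closed {F : Set Z} (hF : IsClosed F) {C : Set F} (hC : IsClosed C) :
    IsClosed (Subtype.val '' C) := by
  obtain ⟨S, hS, rfl⟩ := isClosed_induced_iff.mp hC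
  rw [Subtype.image_preimage_coe]
  exact hF.inter hS

/-- Connected components in a closed set are closed. -/
lemma aux_closed_ccIn {F : Set Z} (hF : IsClosed F) (x : Z) :
    IsClosed (connectedComponentIn F x) := by
  by_cases hx : x ∈ F
  · rw [connectedComponentIn_eq_image hx]
    exact aux_img_closed hF isClosed_connectedComponent
  · rw [connectedComponentIn_eq_empty hx]
    exact isClosed_empty

/-- In a compact Hausdorff space, if the connected component of `z` misses a closed set `F`,
then some clopen neighborhood of `z` misses `F`. -/
lemma aux_clopen_avoid {Y : Type*} [TopologicalSpace Y] [CompactSpace Y] [T2Space Y]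
    {F : Set Y} (hF : IsClosed F) (z : Y) (h : connectedComponent z ∩ F = ∅) :
    ∃ C : Set Y, IsClopen C ∧ z ∈ C ∧ C ∩ F = ∅ := by
  have hcover : F ⊆ ⋃ i : { s : Set Y // IsClopen s ∧ z ∈ s }, (↑i : Set Y)ᶜ := by
    intro w hw
    rw [Set.mem_iUnion]
    by_contra hw2
    push_neg at hw2
    have hwc : w ∈ connectedComponent z := by
      rw [connectedComponent_eq_iInter_isClopen]
      exact Set.mem_iInter.mpr fun i => by simpa using hw2 i
    have : w ∈ connectedComponent z ∩ F := ⟨hwc, hw⟩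
    rw [h] at this
    exact this
  obtain ⟨t, ht⟩ := hF.isCompact.elim_finite_subcover _
    (fun i : { s : Set Y // IsClopen s ∧ z ∈ s } => i.2.1.compl.isOpen) hcover
  refine ⟨⋂ i ∈ t, (↑i : Set Y), isClopen_biInter_finset fun i _ => i.2.1,
    Set.mem_iInter₂.mpr fun i _ => i.2.2, ?_⟩
  rw [Set.eq_empty_iff_forall_notMem]
  rintro w ⟨hwC, hwF⟩
  obtain ⟨i, hit, hi⟩ := Set.mem_iUnion₂.mp (ht hwF)
  exact hi (Set.mem_iInter₂.mp hwC i hit)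

/-- "Cut wire" theorem: in a compact Hausdorff space, if no connected component meets
both closed sets `A` and `B`, then there is a clopen set containing `A` and missing `B`. -/
lemma aux_cutwire {Y : Type*} [TopologicalSpace Y] [CompactSpace Y] [T2Space Y]
    {A B : Set Y} (hA : IsClosed A) (hB : IsClosed B)
    (h : ∀ z : Y, ¬ ((connectedComponent z ∩ A).Nonempty ∧ (connectedComponent z ∩ B).Nonempty)) :
    ∃ C : Set Y, IsClopen C ∧ A ⊆ C ∧ C ∩ B = ∅ := by
  have key : ∀ a ∈ A, ∃ C : Set Y, IsClopen C ∧ a ∈ C ∧ C ∩ B = ∅ := by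
    intro a ha
    have h1 : connectedComponent a ∩ B = ∅ := by
      by_contra hne
      rw [← Set.not_nonempty_iff_eq_empty, not_not] at hne
      exact h a ⟨⟨a, mem_connectedComponent, ha⟩, hne⟩
    exact aux_clopen_avoid hB a h1
  choose! C hC1 hC2 hC3 using key
  have hcover : A ⊆ ⋃ a : ↥A, C ↑a := by
    intro w hw
    exact Set.mem_iUnion.mpr ⟨⟨w, hw⟩, hC2 w hw⟩
  obtain ⟨t, ht⟩ := hA.isCompact.elim_finite_subcover (fun a : ↥A => C ↑a)
    (fun a => (hC1 ↑a a.2).isOpen) hcover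
  refine ⟨⋃ a ∈ t, C ↑a, isClopen_biUnion_finset fun a _ => hC1 ↑a a.2, ht, ?_⟩
  rw [Set.eq_empty_iff_forall_notMem]
  rintro w ⟨hwC, hwB⟩
  obtain ⟨a, _, ha⟩ := Set.mem_iUnion₂.mp hwC
  have : w ∈ C ↑a ∩ B := ⟨ha, hwB⟩
  rw [hC3 ↑a a.2] at this
  exact this

/-- Boundary bumping, weak form: in a connected compact Hausdorff space, the connected
component of `z ∈ U` inside `closure U` meets `closure U \ U`, provided `U` is open
and proper. -/
lemma aux_bump {Z : Type*} [TopologicalSpace Z] [CompactSpace Z] [T2Space Z]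
    [PreconnectedSpace Z] {U : Set Z} (hU : IsOpen U) (hne : U ≠ Set.univ)
    {z : Z} (hz : z ∈ U) :
    (connectedComponentIn (closure U) z ∩ (closure U \ U)).Nonempty := by
  by_contra h
  rw [Set.not_nonempty_iff_eq_empty] at h
  have hYcl : IsClosed (closure U) := isClosed_closure
  haveI : CompactSpace ↥(closure U) := isCompact_iff_compactSpace.mp hYcl.isCompact
  set j : ↥(closure U) := ⟨z, subset_closure hz⟩ with hj
  have hFcl : IsClosed (Subtype.val ⁻¹' (closure U \ U) : Set ↥(closure U)) :=
    (hYcl.sdiff hU).preimage continuous_subtype_val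
  have hcc : connectedComponent j ∩ (Subtype.val ⁻¹' (closure U \ U)) = ∅ := by
    rw [Set.eq_empty_iff_forall_notMem]
    rintro w ⟨hw1, hw2⟩
    have : (↑w : Z) ∈ connectedComponentIn (closure U) z ∩ (closure U \ U) := by
      rw [connectedComponentIn_eq_image (subset_closure hz)]
      exact ⟨⟨w, hw1, rfl⟩, hw2⟩
    rw [h] at this
    exact this
  obtain ⟨C, hCclopen, hjC, hCF⟩ := aux_clopen_avoid hFcl j hcc
  obtain ⟨O, hO, hOC⟩ := isOpen_induced_iff.mp hCclopen.isOpen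
  have hDU : Subtype.val '' C ⊆ U := by
    rintro d ⟨w, hwC, rfl⟩
    by_contra hd
    have : w ∈ C ∩ (Subtype.val ⁻¹' (closure U \ U)) := ⟨hwC, ⟨w.2, hd⟩⟩
    rw [hCF] at this
    exact this
  have hDeq : Subtype.val '' C = O ∩ U := by
    apply Set.Subset.antisymm
    · rintro d ⟨w, hwC, rfl⟩
      refine ⟨?_, hDU ⟨w, hwC, rfl⟩⟩
      rw [← hOC] at hwC
      exact hwC
    · rintro d ⟨hdO, hdU⟩
      refine ⟨⟨d, subset_closure hdU⟩, ?_, rfl⟩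
      rw [← hOC]
      exact hdO
  have hDclopen : IsClopen (Subtype.val '' C) := by
    constructor
    · exact aux_img_closed hYcl hCclopen.isClosed
    · rw [hDeq]; exact hO.inter hU
  have hDuniv : Subtype.val '' C = Set.univ :=
    hDclopen.eq_univ ⟨z, ⟨j, hjC, rfl⟩⟩
  apply hne
  apply Set.eq_univ_of_univ_subset
  rw [← hDuniv]
  exact hDU

/-- One side of a cut point, together with the cut point, is preconnected. -/
lemma aux_side_preconn {X : Type*} [TopologicalSpace X] [PreconnectedSpace X] {y : X}
    {A B : Set X} (hA : IsOpen A) (hAB : A ∩ B = ∅) (hU : A ∪ B = {y}ᶜ)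
    (hclA : closure A ⊆ A ∪ {y}) : IsPreconnected (A ∪ {y}) := by
  set s : Set X := A ∪ {y} with hs
  have hyA : y ∉ A := by
    intro hy
    have : y ∈ ({y}ᶜ : Set X) := by rw [← hU]; exact Or.inl hy
    exact this rfl
  have key : ∀ u v : Set X, IsOpen u → IsOpen v → s ⊆ u ∪ v →
      s ∩ (u ∩ v) = ∅ → y ∈ u → s ∩ v = ∅ := by
    intro u v hu hv hsub hemp hyu
    have hys : y ∈ s := Or.inr rfl
    have hDs : s ∩ v = A ∩ v := by
      apply Set.Subset.antisymm
      · rintro z ⟨hzs, hzv⟩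
        rcases hzs with hzA | hzy
        · exact ⟨hzA, hzv⟩
        · exfalso
          rw [Set.mem_singleton_iff] at hzy
          subst hzy
          have : z ∈ s ∩ (u ∩ v) := ⟨Or.inr rfl, hyu, hzv⟩
          rw [hemp] at this
          exact this
      · rintro z ⟨hzA, hzv⟩
        exact ⟨Or.inl hzA, hzv⟩
    have huD : u ∩ (s ∩ v) = ∅ := by
      rw [Set.eq_empty_iff_forall_notMem]
      rintro z ⟨hzu, hzs, hzv⟩
      have : z ∈ s ∩ (u ∩ v) := ⟨hzs, hzu, hzv⟩
      rw [hemp] at this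
      exact this
    have hDclosed : IsClosed (s ∩ v) := by
      rw [← closure_subset_iff_isClosed]
      intro z hz
      have hzA : z ∈ closure A := by
        apply closure_mono (show s ∩ v ⊆ A by rw [hDs]; exact Set.inter_subset_left)
        exact hz
      have hznu : z ∉ u := by
        intro hzu
        have : z ∉ closure (s ∩ v) := by
          rw [mem_closure_iff]
          push_neg
          exact ⟨u, hu, hzu, by rwa [Set.eq_empty_iff_forall_notMem] at huD ⊢⟩
        exact this hz
      rcases hclA hzA with hzA' | hzy
      · have hzs : z ∈ s := Or.inl hzA'
        rcases hsub hzs with hzu | hzv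
        · exact absurd hzu hznu
        · exact ⟨hzs, hzv⟩
      · exfalso
        rw [Set.mem_singleton_iff] at hzy
        subst hzy
        exact hznu hyu
    have hDopen : IsOpen (s ∩ v) := by
      rw [hDs]
      exact hA.inter hv
    rcases isClopen_iff.mp ⟨hDclosed, hDopen⟩ with h0 | h1
    · exact h0
    · exfalso
      have : y ∈ s ∩ v := by rw [h1]; trivial
      have : y ∈ s ∩ (u ∩ v) := ⟨hys, hyu, this.2⟩
      rw [hemp] at this
      exact this
  intro u v hu hv hsub ⟨a, has, hau⟩ ⟨b, hbs, hbv⟩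
  by_contra hcon
  rw [Set.not_nonempty_iff_eq_empty] at hcon
  have hys : y ∈ s := Or.inr rfl
  rcases hsub hys with hyu | hyv
  · have := key u v hu hv hsub hcon hyu
    rw [Set.eq_empty_iff_forall_notMem] at this
    exact this b ⟨hbs, hbv⟩
  · have hsub' : s ⊆ v ∪ u := by rwa [Set.union_comm]
    have hcon' : s ∩ (v ∩ u) = ∅ := by rwa [Set.inter_comm v u]
    have := key v u hv hu hsub' hcon' hyv
    rw [Set.eq_empty_iff_forall_notMem] at this
    exact this a ⟨has, hau⟩

/-- From a cut point, extract the two sides with all their properties. -/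
lemma aux_sides {X : Type*} [TopologicalSpace X] [T1Space X] [PreconnectedSpace X] {y : X}
    (h : ¬ IsPreconnected ({y}ᶜ : Set X)) :
    ∃ A B : Set X, IsOpen A ∧ IsOpen B ∧ A.Nonempty ∧ B.Nonempty ∧ A ∩ B = ∅ ∧
      A ∪ B = {y}ᶜ ∧ closure A ⊆ A ∪ {y} ∧ closure B ⊆ B ∪ {y} ∧
      y ∈ closure A ∧ y ∈ closure B ∧
      IsPreconnected (A ∪ {y}) ∧ IsPreconnected (B ∪ {y}) := by
  rw [IsPreconnected] at h
  push_neg at h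
  obtain ⟨u, v, hu, hv, hsub, hne1, hne2, hempty'⟩ := h
  set A : Set X := {y}ᶜ ∩ u with hA
  set B : Set X := {y}ᶜ ∩ v with hB
  have hAo : IsOpen A := isOpen_compl_singleton.inter hu
  have hBo : IsOpen B := isOpen_compl_singleton.inter hv
  have hAne : A.Nonempty := hne1
  have hBne : B.Nonempty := hne2
  have hABdisj : A ∩ B = ∅ := by
    rw [Set.eq_empty_iff_forall_notMem]
    rintro w ⟨⟨hw1, hw2⟩, ⟨_, hw3⟩⟩
    have : w ∈ ({y}ᶜ : Set X) ∩ (u ∩ v) := ⟨hw1, hw2, hw3⟩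
    rw [hempty'] at this
    exact this
  have hABun : A ∪ B = {y}ᶜ := by
    apply Set.Subset.antisymm
    · rintro w (⟨hw, _⟩ | ⟨hw, _⟩) <;> exact hw
    · intro w hw
      rcases hsub hw with h1 | h1
      · exact Or.inl ⟨hw, h1⟩
      · exact Or.inr ⟨hw, h1⟩
  have hclA : closure A ⊆ A ∪ {y} := by
    intro z hz
    by_cases hzy : z = y
    · exact Or.inr (by rw [hzy]; rfl)
    · have hzc : z ∈ ({y}ᶜ : Set X) := hzy
      rcases hsub hzc with hzu | hzv
      · exact Or.inl ⟨hzc, hzu⟩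
      · exfalso
        obtain ⟨w, hwv, hwA⟩ := mem_closure_iff.mp hz v hv hzv
        have : w ∈ ({y}ᶜ : Set X) ∩ (u ∩ v) := ⟨hwA.1, hwA.2, hwv⟩
        rw [hempty'] at this
        exact this
  have hclB : closure B ⊆ B ∪ {y} := by
    intro z hz
    by_cases hzy : z = y
    · exact Or.inr (by rw [hzy]; rfl)
    · have hzc : z ∈ ({y}ᶜ : Set X) := hzy
      rcases hsub hzc with hzu | hzv
      · exfalso
        obtain ⟨w, hwu, hwB⟩ := mem_closure_iff.mp hz u hu hzu
        have : w ∈ ({y}ᶜ : Set X) ∩ (u ∩ v) := ⟨hwB.1, hwu, hwB.2⟩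
        rw [hempty'] at this
        exact this
      · exact Or.inl ⟨hzc, hzv⟩
  have hyA : y ∉ A := fun hy => hy.1 rfl
  have hyB : y ∉ B := fun hy => hy.1 rfl
  have hyclA : y ∈ closure A := by
    by_contra hyc
    have hAcl : IsClosed A := by
      rw [← closure_subset_iff_isClosed]
      intro z hz
      rcases hclA hz with h1 | h1
      · exact h1
      · exfalso; rw [Set.mem_singleton_iff] at h1; subst h1; exact hyc hz
    rcases isClopen_iff.mp ⟨hAcl, hAo⟩ with h0 | h1
    · exact hAne.ne_empty h0
    · exact hyA (by rw [h1]; trivial)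
  have hyclB : y ∈ closure B := by
    by_contra hyc
    have hBcl : IsClosed B := by
      rw [← closure_subset_iff_isClosed]
      intro z hz
      rcases hclB hz with h1 | h1
      · exact h1
      · exfalso; rw [Set.mem_singleton_iff] at h1; subst h1; exact hyc hz
    rcases isClopen_iff.mp ⟨hBcl, hBo⟩ with h0 | h1
    · exact hBne.ne_empty h0
    · exact hyB (by rw [h1]; trivial)
  refine ⟨A, B, hAo, hBo, hAne, hBne, hABdisj, hABun, hclA, hclB, hyclA, hyclB, ?_, ?_⟩
  · exact aux_side_preconn hAo hABdisj hABun hclA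
  · exact aux_side_preconn hBo (by rw [Set.inter_comm]; exact hABdisj)
      (by rw [Set.union_comm]; exact hABun) hclB

end Helpers

section StoneCechFacts

variable {X : Type*} [TopologicalSpace X] [T35Space X]

/-- Transfer of closure membership across the Stone–Čech unit, using complete regularity. -/
lemma aux_stone_mem_closure {x : X} {S : Set X}
    (h : stoneCechUnit x ∈ closure (stoneCechUnit '' S)) : x ∈ closure S := by
  rw [mem_closure_iff]
  intro U hU hxU
  obtain ⟨f, hf, hfx, hfK⟩ := CompletelyRegularSpace.completely_regular x Uᶜ
    (isClosed_compl_iff.mpr hU) (by simpa using hxU)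
  set g := stoneCechExtend hf with hg
  have hgc : Continuous g := continuous_stoneCechExtend hf
  have hV : IsOpen (g ⁻¹' {t : unitInterval | (t : ℝ) < 1}) := by
    apply hgc.isOpen_preimage
    exact isOpen_Iio.preimage continuous_subtype_val
  have hxV : stoneCechUnit x ∈ g ⁻¹' {t : unitInterval | (t : ℝ) < 1} := by
    have : g (stoneCechUnit x) = f x := congrFun (stoneCechExtend_extends hf) x
    simp only [Set.mem_preimage, Set.mem_setOf_eq, this, hfx]
    norm_num
  obtain ⟨w, hwV, hwS⟩ := mem_closure_iff.mp h _ hV hxV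
  obtain ⟨s, hsS, rfl⟩ := hwS
  have hfs : (f s : ℝ) < 1 := by
    have heq : g (stoneCechUnit s) = f s := congrFun (stoneCechExtend_extends hf) s
    have h5 : g (stoneCechUnit s) ∈ {t : unitInterval | (t : ℝ) < 1} := hwV
    rwa [heq] at h5
  have hsU : s ∈ U := by
    by_contra hsU
    have : f s = 1 := hfK hsU
    rw [this] at hfs
    norm_num at hfs
  exact ⟨s, hsU, hsS⟩

/-- Open sets in the Stone–Čech compactification are contained in the closure of the
image of their preimage. -/
lemma aux_dense_open_sub {O : Set (StoneCech X)} (hO : IsOpen O) :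
    O ⊆ closure (stoneCechUnit '' (stoneCechUnit ⁻¹' O)) := by
  intro z hz
  rw [mem_closure_iff]
  intro V hV hzV
  have hne : (V ∩ O).Nonempty := ⟨z, hzV, hz⟩
  obtain ⟨a, ha⟩ := denseRange_stoneCechUnit.exists_mem_open (hV.inter hO) hne
  exact ⟨stoneCechUnit a, ha.1, ⟨a, ha.2, rfl⟩⟩

lemma aux_preconn_stoneCech [ConnectedSpace X] : PreconnectedSpace (StoneCech X) := by
  constructor
  have h1 : IsPreconnected (Set.range (stoneCechUnit : X → StoneCech X)) := by
    rw [← Set.image_univ]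
    exact isPreconnected_univ.image _ continuous_stoneCechUnit.continuousOn
  have h2 := h1.closure
  rwa [denseRange_stoneCechUnit.closure_range] at h2

/-- Properties of the closure in `βX` of one side (plus cut point) of a cut point `y`. -/
lemma aux_mkK {y : X} {S T : Set X}
    (hST : S ∩ T = ∅) (hSTu : S ∪ T = {y}ᶜ) (hclS : closure S ⊆ S ∪ {y})
    (hclT : closure T ⊆ T ∪ {y}) (hyS : y ∈ closure S) (hSpc : IsPreconnected (S ∪ {y})) :
    IsPreconnected (closure (stoneCechUnit '' (S ∪ {y}))) ∧
    (stoneCechUnit ⁻¹' closure (stoneCechUnit '' (S ∪ {y})) ⊆ S ∪ {y}) ∧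
    (∀ t ∈ T, stoneCechUnit t ∉ closure (stoneCechUnit '' (S ∪ {y}))) ∧
    (∀ O : Set (StoneCech X), IsOpen O → stoneCechUnit y ∈ O → ∃ s ∈ S, stoneCechUnit s ∈ O) ∧
    (∀ s ∈ S, stoneCechUnit s ∉ closure ((closure (stoneCechUnit '' (S ∪ {y})))ᶜ)) := by
  have hySmem : y ∉ S := by
    intro hy2
    have : y ∈ ({y}ᶜ : Set X) := by rw [← hSTu]; exact Or.inl hy2
    exact this rfl
  have hyTmem : y ∉ T := by
    intro hy2
    have : y ∈ ({y}ᶜ : Set X) := by rw [← hSTu]; exact Or.inr hy2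
    exact this rfl
  have hSycl : IsClosed (S ∪ {y} : Set X) := by
    rw [← closure_subset_iff_isClosed, closure_union, closure_singleton]
    exact Set.union_subset hclS fun z hz => Or.inr hz
  have hpre : stoneCechUnit ⁻¹' closure (stoneCechUnit '' (S ∪ {y})) ⊆ S ∪ {y} := by
    intro z hz
    have := aux_stone_mem_closure hz
    rwa [hSycl.closure_eq] at this
  have hTout : ∀ t ∈ T, stoneCechUnit t ∉ closure (stoneCechUnit '' (S ∪ {y})) := by
    intro t ht hmem
    rcases hpre hmem with h1 | h1
    · have : t ∈ S ∩ T := ⟨h1, ht⟩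
      rw [hST] at this; exact this
    · rw [Set.mem_singleton_iff] at h1; subst h1; exact hyTmem ht
  have hcompl : (closure (stoneCechUnit '' (S ∪ {y})))ᶜ ⊆ closure (stoneCechUnit '' T) := by
    intro z hz
    have h1 := aux_dense_open_sub isClosed_closure.isOpen_compl hz
    refine closure_mono ?_ h1
    rintro w ⟨a, ha, rfl⟩
    rw [Set.mem_preimage, Set.mem_compl_iff] at ha
    have haS : a ∉ S ∪ {y} := fun h => ha (subset_closure ⟨a, h, rfl⟩)
    have haT : a ∈ T := by
      have hane : a ≠ y := fun h => haS (Or.inr h)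
      have h2 : a ∈ ({y}ᶜ : Set X) := hane
      rw [← hSTu] at h2
      rcases h2 with h1 | h1
      · exact absurd (Or.inl h1) haS
      · exact h1
    exact ⟨a, haT, rfl⟩
  refine ⟨(hSpc.image _ continuous_stoneCechUnit.continuousOn).closure, hpre, hTout, ?_, ?_⟩
  · intro O hO hyO
    have hyim : stoneCechUnit y ∈ closure (stoneCechUnit '' S) := by
      have h0 : stoneCechUnit y ∈ stoneCechUnit '' closure S := ⟨y, hyS, rfl⟩
      exact image_closure_subset_closure_image continuous_stoneCechUnit h0
    obtain ⟨w, hwO, hwS⟩ := mem_closure_iff.mp hyim _ hO hyO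
    obtain ⟨s, hsS, rfl⟩ := hwS
    exact ⟨s, hsS, hwO⟩
  · intro s hs hmem
    have h2 : closure ((closure (stoneCechUnit '' (S ∪ {y})))ᶜ) ⊆
        closure (stoneCechUnit '' T) := by
      rw [← closure_closure (s := stoneCechUnit '' T)]
      exact closure_mono hcompl
    have h3 := aux_stone_mem_closure (h2 hmem)
    rcases hclT h3 with h4 | h4
    · have : s ∈ S ∩ T := ⟨hs, h4⟩
      rw [hST] at this; exact this
    · rw [Set.mem_singleton_iff] at h4; subst h4; exact hySmem hs

end StoneCechFacts

section Core

variable {X : Type*} [TopologicalSpace X] [T35Space X] [ConnectedSpace X]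

/-- The core contradiction: given a suitable "side" continuum `KA` through a cut point in
the interior of `I`, with `p ∈ KA`, `q ∉ KA ∪ I`, and witnesses `tA`, `tB` in the
interior of `I` away from each side, we derive `False`. -/
lemma aux_core (p q : StoneCech X)
    (hirr : ∀ K : Set (StoneCech X),
      IsClosed K → IsPreconnected K → p ∈ K → q ∈ K → K = Set.univ)
    (I : Set (StoneCech X)) (hIcl : IsClosed I) (hIco : IsPreconnected I) (hIne : I.Nonempty)
    (hindec : ∀ J : Set (StoneCech X), IsClosed J → IsPreconnected J → J ⊆ I → J ≠ I →
      ∀ G : Set (StoneCech X), IsOpen G → (G ∩ I).Nonempty → ¬ (G ∩ I ⊆ J))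
    (hq : q ∉ I)
    (KA : Set (StoneCech X)) (hKAcl : IsClosed KA) (hKAco : IsPreconnected KA)
    (hpKA : p ∈ KA) (hqKA : q ∉ KA)
    (tA tB : StoneCech X) (htAI : tA ∈ interior I) (htA : tA ∉ closure KAᶜ)
    (htBI : tB ∈ interior I) (htB : tB ∉ KA) : False := by
  haveI : PreconnectedSpace (StoneCech X) := aux_preconn_stoneCech
  have hIcne : (Iᶜ : Set (StoneCech X)) ≠ Set.univ := by
    intro h
    obtain ⟨w, hw⟩ := hIne
    have : w ∈ (Iᶜ : Set (StoneCech X)) := by rw [h]; trivial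
    exact this hw
  -- the component structure of points outside I
  have mk : ∀ z : StoneCech X, z ∉ I →
      IsClosed (connectedComponentIn (closure (Iᶜ : Set (StoneCech X))) z) ∧
      interior I ∩ connectedComponentIn (closure (Iᶜ : Set (StoneCech X))) z = ∅ ∧
      (connectedComponentIn (closure (Iᶜ : Set (StoneCech X))) z ∩ I).Nonempty ∧
      IsPreconnected (connectedComponentIn (closure (Iᶜ : Set (StoneCech X))) z) ∧
      z ∈ connectedComponentIn (closure (Iᶜ : Set (StoneCech X))) z := by
    intro z hz
    refine ⟨aux_closed_ccIn isClosed_closure z, ?_, ?_,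
      isPreconnected_connectedComponentIn, mem_connectedComponentIn (subset_closure hz)⟩
    · rw [Set.eq_empty_iff_forall_notMem]
      rintro v ⟨hv1, hv2⟩
      have hvcl : v ∈ closure (Iᶜ : Set (StoneCech X)) := connectedComponentIn_subset _ _ hv2
      obtain ⟨w, hwint, hwIc⟩ := mem_closure_iff.mp hvcl _ isOpen_interior hv1
      exact hwIc (interior_subset hwint)
    · obtain ⟨w, hw1, hw2⟩ := aux_bump hIcl.isOpen_compl hIcne hz
      exact ⟨w, hw1, by simpa using hw2.2⟩
  obtain ⟨hEqcl, hEqint, hEqI, hEqco, hqEq⟩ := mk q hq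
  set Eq' := connectedComponentIn (closure (Iᶜ : Set (StoneCech X))) q with hEq'
  -- the set Ep
  obtain ⟨Ep, hEpcl, hEpint, hglue⟩ :
      ∃ Ep : Set (StoneCech X), IsClosed Ep ∧ interior I ∩ Ep = ∅ ∧
        ((p ∈ I ∧ Ep = ∅) ∨
          (p ∉ I ∧ (Ep ∩ I).Nonempty ∧ IsPreconnected Ep ∧ p ∈ Ep)) := by
    by_cases hp : p ∈ I
    · exact ⟨∅, isClosed_empty, Set.inter_empty _, Or.inl ⟨hp, rfl⟩⟩
    · obtain ⟨h1, h2, h3, h4, h5⟩ := mk p hp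
      exact ⟨_, h1, h2, Or.inr ⟨hp, h3, h4, h5⟩⟩
  -- βX = I ∪ Ep ∪ Eq'
  have hZ : I ∪ Ep ∪ Eq' = Set.univ := by
    apply hirr _ ((hIcl.union hEpcl).union hEqcl)
    · obtain ⟨w, hwEq, hwI⟩ := hEqI
      rcases hglue with ⟨hp, hEp0⟩ | ⟨hp, ⟨w2, hw2Ep, hw2I⟩, hEpco, hpEp⟩
      · rw [hEp0, Set.union_empty]
        exact IsPreconnected.union w hwI hwEq hIco hEqco
      · have h1 : IsPreconnected (I ∪ Ep) :=
          IsPreconnected.union w2 hw2I hw2Ep hIco hEpco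
        exact IsPreconnected.union w (Or.inl hwI) hwEq h1 hEqco
    · rcases hglue with ⟨hp, _⟩ | ⟨_, _, _, hpEp⟩
      · exact Or.inl (Or.inl hp)
      · exact Or.inl (Or.inr hpEp)
    · exact Or.inr hqEq
  have hint_eq : interior I = (Ep ∪ Eq')ᶜ := by
    apply Set.Subset.antisymm
    · intro z hz
      rintro (hzEp | hzEq)
      · have : z ∈ interior I ∩ Ep := ⟨hz, hzEp⟩
        rw [hEpint] at this; exact this
      · have : z ∈ interior I ∩ Eq' := ⟨hz, hzEq⟩
        rw [hEqint] at this; exact this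
    · have hsub : (Ep ∪ Eq')ᶜ ⊆ I := by
        intro z hz
        have hzu : z ∈ I ∪ Ep ∪ Eq' := by rw [hZ]; trivial
        rcases hzu with (hzI | hzEp) | hzEq
        · exact hzI
        · exact absurd (Or.inl hzEp) hz
        · exact absurd (Or.inr hzEq) hz
      exact interior_maximal hsub (hEpcl.union hEqcl).isOpen_compl
  -- the key open set W
  set K : Set (StoneCech X) := (Ep ∪ KA) ∪ Eq' with hK
  have hW : Kᶜ = interior I \ KA := by
    rw [hint_eq]
    ext z
    simp only [hK, Set.mem_compl_iff, Set.mem_union, Set.mem_diff, not_or]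
    tauto
  have htBW : tB ∈ Kᶜ := by rw [hW]; exact ⟨htBI, htB⟩
  have hΛcl : IsClosed (Ep ∪ KA) := hEpcl.union hKAcl
  have hΛco : IsPreconnected (Ep ∪ KA) := by
    rcases hglue with ⟨_, hEp0⟩ | ⟨_, _, hEpco, hpEp⟩
    · rw [hEp0, Set.empty_union]; exact hKAco
    · exact IsPreconnected.union p hpEp hpKA hEpco hKAco
  have hpΛ : p ∈ Ep ∪ KA := Or.inr hpKA
  have hdisj : (Ep ∪ KA) ∩ Eq' = ∅ := by
    by_contra hcon
    rw [← Set.not_nonempty_iff_eq_empty, not_not] at hcon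
    obtain ⟨w, hwΛ, hwEq⟩ := hcon
    have hMuniv : K = Set.univ := by
      apply hirr _ (hΛcl.union hEqcl)
      · exact IsPreconnected.union w hwΛ hwEq hΛco hEqco
      · exact Or.inl hpΛ
      · exact Or.inr hqEq
    have : tB ∈ K := by rw [hMuniv]; trivial
    exact htBW this
  -- the space Y = closure W
  set Y : Set (StoneCech X) := closure Kᶜ with hY
  have hYI : Y ⊆ I := by
    apply closure_minimal _ hIcl
    intro z hz
    rw [hW] at hz
    exact interior_subset hz.1
  have hYKAc : Y ⊆ closure KAᶜ := by
    apply closure_mono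
    intro z hz
    rw [hW] at hz
    exact hz.2
  have htAY : tA ∉ Y := fun h => htA (hYKAc h)
  have hYcl : IsClosed Y := isClosed_closure
  haveI : CompactSpace ↥Y := isCompact_iff_compactSpace.mp hYcl.isCompact
  have hA1cl : IsClosed (Subtype.val ⁻¹' (Ep ∪ KA) : Set ↥Y) :=
    hΛcl.preimage continuous_subtype_val
  have hB1cl : IsClosed (Subtype.val ⁻¹' Eq' : Set ↥Y) :=
    hEqcl.preimage continuous_subtype_val
  by_cases hcomp : ∃ j : ↥Y,
      (connectedComponent j ∩ (Subtype.val ⁻¹' (Ep ∪ KA))).Nonempty ∧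
      (connectedComponent j ∩ (Subtype.val ⁻¹' Eq')).Nonempty
  · -- a component of Y joining the two sides: contradiction with indecomposability
    obtain ⟨j, ⟨w1, hw1c, hw1A⟩, ⟨w2, hw2c, hw2B⟩⟩ := hcomp
    set J : Set (StoneCech X) := Subtype.val '' connectedComponent j with hJ
    have hJcl : IsClosed J := aux_img_closed hYcl isClosed_connectedComponent
    have hJco : IsPreconnected J :=
      isPreconnected_connectedComponent.image _ continuous_subtype_val.continuousOn
    have hJY : J ⊆ Y := by rintro _ ⟨w, _, rfl⟩; exact w.2
    have hJI : J ⊆ I := hJY.trans hYI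
    have hMuniv : (J ∪ (Ep ∪ KA)) ∪ Eq' = Set.univ := by
      apply hirr _ ((hJcl.union hΛcl).union hEqcl)
      · have u1 : IsPreconnected (J ∪ (Ep ∪ KA)) :=
          IsPreconnected.union ↑w1 ⟨w1, hw1c, rfl⟩ hw1A hJco hΛco
        exact IsPreconnected.union ↑w2 (Or.inl ⟨w2, hw2c, rfl⟩) hw2B u1 hEqco
      · exact Or.inl (Or.inr hpΛ)
      · exact Or.inr hqEq
    have hWJ : Kᶜ ⊆ J := by
      intro z hz
      have hzM : z ∈ (J ∪ (Ep ∪ KA)) ∪ Eq' := by rw [hMuniv]; trivial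
      rcases hzM with (hzJ | hzΛ) | hzEq
      · exact hzJ
      · exact absurd (Or.inl hzΛ) hz
      · exact absurd (Or.inr hzEq) hz
    have hJne : J ≠ I := by
      intro h
      apply htAY
      apply hJY
      rw [h]
      exact interior_subset htAI
    exact hindec J hJcl hJco hJI hJne Kᶜ (hΛcl.union hEqcl).isOpen_compl
      ⟨tB, htBW, interior_subset htBI⟩ (fun z hz => hWJ hz.1)
  · -- no such component: Y splits, contradicting connectedness of βX
    obtain ⟨C, hCclopen, hA1C, hCB1⟩ := aux_cutwire hA1cl hB1cl (fun z hz => hcomp ⟨z, hz⟩)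
    set S1 : Set (StoneCech X) := Subtype.val '' C with hS1
    set S2 : Set (StoneCech X) := Subtype.val '' Cᶜ with hS2
    have hS1cl : IsClosed S1 := aux_img_closed hYcl hCclopen.isClosed
    have hS2cl : IsClosed S2 := aux_img_closed hYcl hCclopen.compl.isClosed
    have hS1Y : S1 ⊆ Y := by rintro _ ⟨w, _, rfl⟩; exact w.2
    have hS2Y : S2 ⊆ Y := by rintro _ ⟨w, _, rfl⟩; exact w.2
    have hS12 : S1 ∩ S2 = ∅ := by
      rw [Set.eq_empty_iff_forall_notMem]
      rintro w ⟨⟨w1, hw1, e1⟩, ⟨w2, hw2, e2⟩⟩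
      have : w1 = w2 := Subtype.coe_injective (e1.trans e2.symm)
      rw [this] at hw1
      exact hw2 hw1
    have hS12Y : Y ⊆ S1 ∪ S2 := by
      intro z hz
      by_cases hC : (⟨z, hz⟩ : ↥Y) ∈ C
      · exact Or.inl ⟨⟨z, hz⟩, hC, rfl⟩
      · exact Or.inr ⟨⟨z, hz⟩, hC, rfl⟩
    set F1 : Set (StoneCech X) := (Ep ∪ KA) ∪ S1 with hF1
    set F2 : Set (StoneCech X) := Eq' ∪ S2 with hF2
    have hF1cl : IsClosed F1 := hΛcl.union hS1cl
    have hF2cl : IsClosed F2 := hEqcl.union hS2cl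
    have hcover : F1 ∪ F2 = Set.univ := by
      rw [Set.eq_univ_iff_forall]
      intro z
      by_cases hzK : z ∈ K
      · rcases hzK with hzΛ | hzEq
        · exact Or.inl (Or.inl hzΛ)
        · exact Or.inr (Or.inl hzEq)
      · have hzY : z ∈ Y := subset_closure hzK
        rcases hS12Y hzY with h1 | h1
        · exact Or.inl (Or.inr h1)
        · exact Or.inr (Or.inr h1)
    have hdisjF : F1 ∩ F2 = ∅ := by
      rw [Set.eq_empty_iff_forall_notMem]
      rintro w ⟨hw1, hw2⟩
      rcases hw1 with hwΛ | hwS1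
      · rcases hw2 with hwEq | hwS2
        · have : w ∈ (Ep ∪ KA) ∩ Eq' := ⟨hwΛ, hwEq⟩
          rw [hdisj] at this; exact this
        · obtain ⟨w2', hw2', e2⟩ := hwS2
          have hwA1 : w2' ∈ (Subtype.val ⁻¹' (Ep ∪ KA) : Set ↥Y) := by
            rw [Set.mem_preimage, e2]; exact hwΛ
          exact hw2' (hA1C hwA1)
      · rcases hw2 with hwEq | hwS2
        · obtain ⟨w1', hw1', e1⟩ := hwS1
          have hwB1 : w1' ∈ (Subtype.val ⁻¹' Eq' : Set ↥Y) := by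
            rw [Set.mem_preimage, e1]; exact hwEq
          have : w1' ∈ C ∩ (Subtype.val ⁻¹' Eq') := ⟨hw1', hwB1⟩
          rw [hCB1] at this; exact this
        · have : w ∈ S1 ∩ S2 := ⟨hwS1, hwS2⟩
          rw [hS12] at this; exact this
    have hF1open : IsOpen F1 := by
      have : F1 = F2ᶜ := by
        apply Set.Subset.antisymm
        · intro z hz hz2
          have : z ∈ F1 ∩ F2 := ⟨hz, hz2⟩
          rw [hdisjF] at this; exact this
        · intro z hz
          have : z ∈ F1 ∪ F2 := by rw [hcover]; trivial
          rcases this with h1 | h1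
          · exact h1
          · exact absurd h1 hz
      rw [this]
      exact hF2cl.isOpen_compl
    rcases isClopen_iff.mp ⟨hF1cl, hF1open⟩ with h0 | h1
    · have : p ∈ F1 := Or.inl hpΛ
      rw [h0] at this; exact this
    · have hqF1 : q ∈ F1 := by rw [h1]; trivial
      have : q ∈ F1 ∩ F2 := ⟨hqF1, Or.inl hqEq⟩
      rw [hdisjF] at this; exact this

/-- The main argument, assuming `q ∉ I`. -/
lemma aux_main (hcut : ∀ x : X, ¬ IsPreconnected ({x}ᶜ : Set X))
    (p q : StoneCech X)
    (hirr : ∀ K : Set (StoneCech X),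
      IsClosed K → IsPreconnected K → p ∈ K → q ∈ K → K = Set.univ)
    (I : Set (StoneCech X)) (hIcl : IsClosed I) (hIco : IsPreconnected I) (hIne : I.Nonempty)
    (hindec : ∀ J : Set (StoneCech X), IsClosed J → IsPreconnected J → J ⊆ I → J ≠ I →
      ∀ G : Set (StoneCech X), IsOpen G → (G ∩ I).Nonempty → ¬ (G ∩ I ⊆ J))
    (hq : q ∉ I) (hint : (interior I).Nonempty) : False := by
  haveI : PreconnectedSpace (StoneCech X) := aux_preconn_stoneCech
  obtain ⟨y, hy⟩ : ∃ y : X, stoneCechUnit y ∈ interior I :=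
    denseRange_stoneCechUnit.exists_mem_open isOpen_interior hint
  obtain ⟨A, B, hAo, hBo, hAne, hBne, hABdisj, hABun, hclA, hclB, hyclA, hyclB, hApc, hBpc⟩ :=
    aux_sides (hcut y)
  obtain ⟨hKAco, hKApre, hKAout, hKAnear, hKAfar⟩ :=
    aux_mkK hABdisj hABun hclA hclB hyclA hApc
  obtain ⟨hKBco, hKBpre, hKBout, hKBnear, hKBfar⟩ :=
    aux_mkK (by rw [Set.inter_comm]; exact hABdisj) (by rw [Set.union_comm]; exact hABun)
      hclB hclA hyclB hBpc
  set KA : Set (StoneCech X) := closure (stoneCechUnit '' (A ∪ {y})) with hKA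
  set KB : Set (StoneCech X) := closure (stoneCechUnit '' (B ∪ {y})) with hKB
  have hcover : KA ∪ KB = Set.univ := by
    rw [hKA, hKB, ← closure_union, ← Set.image_union]
    have huniv : (A ∪ {y}) ∪ (B ∪ {y}) = (Set.univ : Set X) := by
      rw [Set.eq_univ_iff_forall]
      intro z
      by_cases hz : z = y
      · exact Or.inl (Or.inr hz)
      · have : z ∈ ({y}ᶜ : Set X) := hz
        rw [← hABun] at this
        rcases this with h1 | h1
        · exact Or.inl (Or.inl h1)
        · exact Or.inr (Or.inl h1)
    rw [huniv, Set.image_univ]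
    exact denseRange_stoneCechUnit.closure_range
  obtain ⟨sA, hsA, hsAint⟩ := hKAnear _ isOpen_interior hy
  obtain ⟨sB, hsB, hsBint⟩ := hKBnear _ isOpen_interior hy
  obtain ⟨b0, hb0⟩ := hBne
  obtain ⟨a0, ha0⟩ := hAne
  have hnbA : ¬ (p ∈ KA ∧ q ∈ KA) := by
    rintro ⟨h1, h2⟩
    apply hKAout b0 hb0
    rw [hirr KA isClosed_closure hKAco h1 h2]
    trivial
  have hnbB : ¬ (p ∈ KB ∧ q ∈ KB) := by
    rintro ⟨h1, h2⟩
    apply hKBout a0 ha0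
    rw [hirr KB isClosed_closure hKBco h1 h2]
    trivial
  by_cases hpA : p ∈ KA
  · have hqA : q ∉ KA := fun h => hnbA ⟨hpA, h⟩
    exact aux_core p q hirr I hIcl hIco hIne hindec hq KA isClosed_closure hKAco hpA hqA
      (stoneCechUnit sA) (stoneCechUnit sB) hsAint (hKAfar sA hsA) hsBint (hKAout sB hsB)
  · have hpB : p ∈ KB := by
      have : p ∈ KA ∪ KB := by rw [hcover]; trivial
      rcases this with h1 | h1
      · exact absurd h1 hpA
      · exact h1
    have hqB : q ∉ KB := fun h => hnbB ⟨hpB, h⟩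
    exact aux_core p q hirr I hIcl hIco hIne hindec hq KB isClosed_closure hKBco hpB hqB
      (stoneCechUnit sB) (stoneCechUnit sA) hsBint (hKBfar sB hsB) hsAint (hKBout sA hsA)

end Core

/-- Let `X` be a Tychonoff cut-point space such that `βX` is irreducible between `p` and
`q`.  Then every indecomposable subcontinuum of `βX` is nowhere dense in `βX`. -/
theorem stmt_17 {X : Type*} [TopologicalSpace X] [T35Space X] [ConnectedSpace X]
    (hcut : ∀ x : X, ¬ IsPreconnected ({x}ᶜ : Set X))
    (p q : StoneCech X)
    (hirr : ∀ K : Set (StoneCech X),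
      IsClosed K → IsPreconnected K → p ∈ K → q ∈ K → K = Set.univ)
    (I : Set (StoneCech X)) (hIcl : IsClosed I) (hIco : IsPreconnected I) (hIne : I.Nonempty)
    (hindec : ∀ J : Set (StoneCech X), IsClosed J → IsPreconnected J → J ⊆ I → J ≠ I →
      ∀ G : Set (StoneCech X), IsOpen G → (G ∩ I).Nonempty → ¬ (G ∩ I ⊆ J)) :
    interior I = ∅ := by
  by_contra h
  have hint : (interior I).Nonempty := Set.nonempty_iff_ne_empty.mpr h
  by_cases hq : q ∈ I
  · by_cases hp : p ∈ I
    · -- both `p` and `q` lie in `I`, so `I = βX`; decompose `βX` at any cut point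
      have hIuniv : I = Set.univ := hirr I hIcl hIco hp hq
      obtain ⟨x0⟩ : Nonempty X := inferInstance
      obtain ⟨A, B, hAo, hBo, hAne, hBne, hABdisj, hABun, hclA, hclB, hyclA, hyclB, hApc, hBpc⟩ :=
        aux_sides (hcut x0)
      obtain ⟨hKAco, hKApre, hKAout, hKAnear, hKAfar⟩ :=
        aux_mkK hABdisj hABun hclA hclB hyclA hApc
      obtain ⟨hKBco, hKBpre, hKBout, hKBnear, hKBfar⟩ :=
        aux_mkK (by rw [Set.inter_comm]; exact hABdisj) (by rw [Set.union_comm]; exact hABun)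
          hclB hclA hyclB hBpc
      set KA : Set (StoneCech X) := closure (stoneCechUnit '' (A ∪ {x0})) with hKA
      set KB : Set (StoneCech X) := closure (stoneCechUnit '' (B ∪ {x0})) with hKB
      have hcover : KA ∪ KB = Set.univ := by
        rw [hKA, hKB, ← closure_union, ← Set.image_union]
        have huniv : (A ∪ {x0}) ∪ (B ∪ {x0}) = (Set.univ : Set X) := by
          rw [Set.eq_univ_iff_forall]
          intro z
          by_cases hz : z = x0
          · exact Or.inl (Or.inr hz)
          · have : z ∈ ({x0}ᶜ : Set X) := hz
            rw [← hABun] at this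
            rcases this with h1 | h1
            · exact Or.inl (Or.inl h1)
            · exact Or.inr (Or.inl h1)
        rw [huniv, Set.image_univ]
        exact denseRange_stoneCechUnit.closure_range
      obtain ⟨b0, hb0⟩ := hBne
      obtain ⟨a0, ha0⟩ := hAne
      have hKAsub : KA ⊆ I := by rw [hIuniv]; exact Set.subset_univ _
      have hKAne : KA ≠ I := by
        intro hEq
        apply hKAout b0 hb0
        rw [hEq, hIuniv]
        trivial
      have hGne : (KBᶜ ∩ I).Nonempty :=
        ⟨stoneCechUnit a0, hKBout a0 ha0, by rw [hIuniv]; trivial⟩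
      have hGsub : KBᶜ ∩ I ⊆ KA := by
        rintro z ⟨hz1, _⟩
        have : z ∈ KA ∪ KB := by rw [hcover]; trivial
        rcases this with h1 | h1
        · exact h1
        · exact absurd h1 hz1
      exact hindec KA isClosed_closure hKAco hKAsub hKAne KBᶜ
        isClosed_closure.isOpen_compl hGne hGsub
    · -- `p ∉ I`: apply the main argument with the roles of `p` and `q` exchanged
      exact (aux_main hcut q p
        (fun K hKc hKp h1 h2 => hirr K hKc hKp h2 h1)
        I hIcl hIco hIne hindec hp hint).elim
  · exact (aux_main hcut p q hirr I hIcl hIco hIne hindec hq hint).elim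
end

section
/- Let X be a compact connected topological space with more than one point. Then X has at least two non-cut points, i.e., there are two distinct points x, y such that X \ {x} and X \ {y} are both connected. -/
open Set

section Aux

variable {X : Type*} [TopologicalSpace X]

/-- A preconnected set inside a disjoint open cover lies in the piece it meets. -/
private lemma aux_sub_of_mem {t u v : Set X} (ht : IsPreconnected t)
    (hu : IsOpen u) (hv : IsOpen v) (hcov : t ⊆ u ∪ v) (hdis : t ∩ (u ∩ v) = ∅)
    {z : X} (hz : z ∈ t) (hzu : z ∈ u) : t ⊆ u := by
  rcases (isPreconnected_iff_subset_of_disjoint.mp ht) u v hu hv hcov hdis with h | h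
  · exact h
  · have : z ∈ t ∩ (u ∩ v) := ⟨hz, hzu, h hz⟩
    rw [hdis] at this
    exact this.elim

/-- If `{x}ᶜ` is covered by disjoint opens `u₀, v₀`, then the `u₀`-side together with `x`
is preconnected. -/
private lemma aux_side_conn [PreconnectedSpace X] {x : X} {u₀ v₀ : Set X}
    (hu₀ : IsOpen u₀) (hv₀ : IsOpen v₀) (hcov : ({x}ᶜ : Set X) ⊆ u₀ ∪ v₀)
    (hdis : ({x}ᶜ : Set X) ∩ (u₀ ∩ v₀) = ∅) :
    IsPreconnected ((({x}ᶜ : Set X) ∩ u₀) ∪ {x}) := by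
  set s : Set X := (({x}ᶜ : Set X) ∩ u₀) ∪ {x} with hs
  have key : ∀ u v : Set X, IsOpen u → IsOpen v → s ⊆ u ∪ v → s ∩ (u ∩ v) = ∅ →
      x ∈ u → s ⊆ u := by
    intro u v hu hv hcov' hdis' hxu
    have hxs : x ∈ s := Or.inr rfl
    -- apply preconnectedness of the whole space to `u ∪ v₀` and `v ∩ u₀`
    have hcovX : (univ : Set X) ⊆ (u ∪ v₀) ∪ (v ∩ u₀) := by
      intro z _
      by_cases hzx : z = x
      · exact Or.inl (Or.inl (hzx ▸ hxu))
      · rcases hcov hzx with hz | hz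
        · rcases hcov' (Or.inl ⟨hzx, hz⟩) with h | h
          · exact Or.inl (Or.inl h)
          · exact Or.inr ⟨h, hz⟩
        · exact Or.inl (Or.inr hz)
    have hdisX : (univ : Set X) ∩ ((u ∪ v₀) ∩ (v ∩ u₀)) = ∅ := by
      ext z
      simp only [mem_inter_iff, mem_univ, true_and, mem_empty_iff_false, iff_false]
      rintro ⟨hz1, hzv, hzu₀⟩
      by_cases hzx : z = x
      · subst hzx
        have : z ∈ s ∩ (u ∩ v) := ⟨hxs, hxu, hzv⟩
        rw [hdis'] at this; exact this
      · have hzs : z ∈ s := Or.inl ⟨hzx, hzu₀⟩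
        rcases hz1 with hzu | hzv₀
        · have : z ∈ s ∩ (u ∩ v) := ⟨hzs, hzu, hzv⟩
          rw [hdis'] at this; exact this
        · have : z ∈ ({x}ᶜ : Set X) ∩ (u₀ ∩ v₀) := ⟨hzx, hzu₀, hzv₀⟩
          rw [hdis] at this; exact this
    rcases (isPreconnected_iff_subset_of_disjoint.mp isPreconnected_univ)
        (u ∪ v₀) (v ∩ u₀) (hu.union hv₀) (hv.inter hu₀) hcovX hdisX with hX | hX
    · -- univ ⊆ u ∪ v₀ : conclude s ⊆ u
      intro z hzs
      rcases hzs with ⟨hzx, hzu₀⟩ | hzx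
      · rcases hX (mem_univ z) with hzu | hzv₀
        · exact hzu
        · have : z ∈ ({x}ᶜ : Set X) ∩ (u₀ ∩ v₀) := ⟨hzx, hzu₀, hzv₀⟩
          rw [hdis] at this; exact this.elim
      · rw [hzx]; exact hxu
    · -- univ ⊆ v ∩ u₀ : impossible since x ∈ u
      have hxv : x ∈ v := (hX (mem_univ x)).1
      have : x ∈ s ∩ (u ∩ v) := ⟨hxs, hxu, hxv⟩
      rw [hdis'] at this; exact this.elim
  rw [isPreconnected_iff_subset_of_disjoint]
  intro u v hu hv hcov' hdis'
  have hxuv : x ∈ u ∪ v := hcov' (Or.inr rfl)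
  rcases hxuv with hxu | hxv
  · exact Or.inl (key u v hu hv hcov' hdis' hxu)
  · refine Or.inr (key v u hv hu ?_ ?_ hxv)
    · rwa [union_comm]
    · rwa [inter_comm v u]

/-- Main lemma: in a compact preconnected space, each side of a cut at `x`
contains a non-cut point. -/
private lemma aux_main_s19 [CompactSpace X] [PreconnectedSpace X] {x : X} {u₀ v₀ : Set X}
    (hu₀ : IsOpen u₀) (hv₀ : IsOpen v₀) (hcov : ({x}ᶜ : Set X) ⊆ u₀ ∪ v₀)
    (hdis : ({x}ᶜ : Set X) ∩ (u₀ ∩ v₀) = ∅)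
    (hAne : (({x}ᶜ : Set X) ∩ u₀).Nonempty) :
    ∃ a ∈ ({x}ᶜ : Set X) ∩ u₀, IsPreconnected ({a}ᶜ : Set X) := by
  classical
  set A : Set X := ({x}ᶜ : Set X) ∩ u₀ with hA
  set B : Set X := ({x}ᶜ : Set X) ∩ v₀ with hBdef
  by_contra hcon
  push_neg at hcon
  -- hcon : ∀ a ∈ A, ¬ IsPreconnected {a}ᶜ
  have hchoice : ∀ a ∈ A, ∃ u v : Set X, IsOpen u ∧ IsOpen v ∧ ({a}ᶜ : Set X) ⊆ u ∪ v ∧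
      ({a}ᶜ : Set X) ∩ (u ∩ v) = ∅ ∧ x ∈ u ∧ (({a}ᶜ : Set X) ∩ v).Nonempty := by
    intro a ha
    have hax : a ≠ x := fun h => ha.1 (h ▸ rfl)
    have hxa : x ∈ ({a}ᶜ : Set X) := fun h => hax (by simpa using h.symm)
    have h := hcon a ha
    rw [isPreconnected_iff_subset_of_disjoint] at h
    push_neg at h
    obtain ⟨u, v, hu, hv, hc, hd, hnu, hnv⟩ := h
    obtain ⟨zu, hzu, hzu'⟩ := not_subset.mp hnu
    obtain ⟨zv, hzv, hzv'⟩ := not_subset.mp hnv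
    rcases hc hxa with hxu | hxv
    · refine ⟨u, v, hu, hv, hc, hd, hxu, ⟨zu, hzu, ?_⟩⟩
      rcases hc hzu with h' | h'
      · exact absurd h' hzu'
      · exact h'
    · refine ⟨v, u, hv, hu, by rwa [union_comm], by rwa [inter_comm v u], hxv, ⟨zv, hzv, ?_⟩⟩
      rcases hc hzv with h' | h'
      · exact h'
      · exact absurd h' hzv'
  choose! uf vf huf hvf hcovf hdisf hxuf hVne using hchoice
  set V : X → Set X := fun a => ({a}ᶜ : Set X) ∩ vf a with hV
  -- closure of V a is inside V a ∪ {a}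
  have hclV : ∀ a ∈ A, closure (V a) ⊆ V a ∪ {a} := by
    intro a ha z hz
    by_cases hza : z = a
    · exact Or.inr hza
    · refine Or.inl ⟨hza, ?_⟩
      have hVu : V a ⊆ (uf a)ᶜ := by
        intro w hw hwu
        have : w ∈ ({a}ᶜ : Set X) ∩ (uf a ∩ vf a) := ⟨hw.1, hwu, hw.2⟩
        rw [hdisf a ha] at this; exact this
      have hzc : z ∈ (uf a)ᶜ :=
        closure_minimal hVu (isClosed_compl_iff.mpr (huf a ha)) hz
      rcases hcovf a ha (show z ∈ ({a}ᶜ : Set X) from hza) with h' | h'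
      · exact absurd h' hzc
      · exact h'
  -- B ∪ {x} is preconnected
  have hBconn : IsPreconnected (B ∪ {x}) :=
    aux_side_conn hv₀ hu₀ (by rwa [union_comm]) (by rwa [inter_comm v₀ u₀])
  -- for a ∈ A : B ∪ {x} ⊆ uf a, and V a ⊆ A
  have hBsub : ∀ a ∈ A, B ∪ {x} ⊆ uf a := by
    intro a ha
    have haB : a ∉ B := by
      intro h
      have : a ∈ ({x}ᶜ : Set X) ∩ (u₀ ∩ v₀) := ⟨ha.1, ha.2, h.2⟩
      rw [hdis] at this; exact this
    have hax : a ≠ x := fun h => ha.1 (h ▸ rfl)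
    have hsub : B ∪ {x} ⊆ ({a}ᶜ : Set X) := by
      rintro z (hz | hz)
      · exact fun h => haB (h ▸ hz)
      · exact fun h => hax (by rw [← h, hz])
    exact aux_sub_of_mem hBconn (huf a ha) (hvf a ha)
      (hsub.trans (hcovf a ha))
      (by
        have : (B ∪ {x}) ∩ (uf a ∩ vf a) ⊆ ({a}ᶜ : Set X) ∩ (uf a ∩ vf a) :=
          inter_subset_inter_left _ hsub
        rw [hdisf a ha] at this
        exact subset_empty_iff.mp this)
      (Or.inr rfl) (hxuf a ha)
  have hVsubA : ∀ a ∈ A, V a ⊆ A := by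
    intro a ha z hz
    have hzu : z ∉ uf a := by
      intro h
      have : z ∈ ({a}ᶜ : Set X) ∩ (uf a ∩ vf a) := ⟨hz.1, h, hz.2⟩
      rw [hdisf a ha] at this; exact this
    have hzB : z ∉ B ∪ {x} := fun h => hzu (hBsub a ha h)
    have hzx : z ≠ x := fun h => hzB (Or.inr h)
    rcases hcov (show z ∈ ({x}ᶜ : Set X) from hzx) with h' | h'
    · exact ⟨hzx, h'⟩
    · exact absurd (Or.inl ⟨hzx, h'⟩ : z ∈ B ∪ {x}) hzB
  -- key step: if b ∈ V a then V b ⊆ V a \ {b}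
  have hstep : ∀ a ∈ A, ∀ b ∈ V a, V b ⊆ V a \ {b} := by
    intro a ha b hb
    have hbA : b ∈ A := hVsubA a ha hb
    have hax : a ≠ x := fun h => ha.1 (h ▸ rfl)
    -- U a ∪ {a} is preconnected and avoids b
    have hUconn : IsPreconnected ((({a}ᶜ : Set X) ∩ uf a) ∪ {a}) :=
      aux_side_conn (huf a ha) (hvf a ha) (hcovf a ha) (hdisf a ha)
    have hbu : b ∉ uf a := by
      intro h
      have : b ∈ ({a}ᶜ : Set X) ∩ (uf a ∩ vf a) := ⟨hb.1, h, hb.2⟩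
      rw [hdisf a ha] at this; exact this
    have hsub : (({a}ᶜ : Set X) ∩ uf a) ∪ {a} ⊆ ({b}ᶜ : Set X) := by
      rintro z (hz | hz)
      · exact fun h => hbu (h ▸ hz.2)
      · exact fun h => hb.1 (by rw [← h, hz]; exact rfl)
    have hxU : x ∈ (({a}ᶜ : Set X) ∩ uf a) ∪ {a} :=
      Or.inl ⟨fun h => hax (by simpa using h.symm), hxuf a ha⟩
    have hUsub : (({a}ᶜ : Set X) ∩ uf a) ∪ {a} ⊆ uf b :=
      aux_sub_of_mem hUconn (huf b hbA) (hvf b hbA) (hsub.trans (hcovf b hbA))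
        (by
          have : ((({a}ᶜ : Set X) ∩ uf a) ∪ {a}) ∩ (uf b ∩ vf b) ⊆
              ({b}ᶜ : Set X) ∩ (uf b ∩ vf b) := inter_subset_inter_left _ hsub
          rw [hdisf b hbA] at this
          exact subset_empty_iff.mp this)
        hxU (hxuf b hbA)
    intro z hz
    have hzub : z ∉ uf b := by
      intro h
      have : z ∈ ({b}ᶜ : Set X) ∩ (uf b ∩ vf b) := ⟨hz.1, h, hz.2⟩
      rw [hdisf b hbA] at this; exact this
    have hzU : z ∉ (({a}ᶜ : Set X) ∩ uf a) ∪ {a} := fun h => hzub (hUsub h)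
    have hza : z ≠ a := fun h => hzU (Or.inr h)
    have hzua : z ∉ uf a := fun h => hzU (Or.inl ⟨hza, h⟩)
    have hzb : z ≠ b := hz.1
    refine ⟨⟨hza, ?_⟩, hzb⟩
    rcases hcovf a ha (show z ∈ ({a}ᶜ : Set X) from hza) with h' | h'
    · exact absurd h' hzua
    · exact h'
  -- Zorn: take a minimal closure (V a)
  set S : Set (Set X) := (fun a => closure (V a)) '' A with hS
  obtain ⟨b₀, hb₀A⟩ : A.Nonempty := hAne
  have hmin : ∃ m, Minimal (· ∈ S) m := by
    apply zorn_superset S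
    intro c hcS hc
    rcases c.eq_empty_or_nonempty with rfl | hcne
    · exact ⟨closure (V b₀), ⟨b₀, hb₀A, rfl⟩, by simp⟩
    · have hcl : ∀ s ∈ c, IsClosed s := by
        intro s hs
        obtain ⟨a, _, rfl⟩ := hcS hs
        exact isClosed_closure
      have hcmp : ∀ s ∈ c, IsCompact s := fun s hs => (hcl s hs).isCompact
      have hne : ∀ s ∈ c, s.Nonempty := by
        intro s hs
        obtain ⟨a, ha, rfl⟩ := hcS hs
        exact (hVne a ha).mono subset_closure
      haveI : Nonempty c := hcne.to_subtype
      have hdir : DirectedOn (· ⊇ ·) c := by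
        intro s hs t ht
        rcases hc.total hs ht with h | h
        · exact ⟨s, hs, Set.Subset.rfl, h⟩
        · exact ⟨t, ht, h, Set.Subset.rfl⟩
      obtain ⟨b, hb⟩ :=
        IsCompact.nonempty_sInter_of_directed_nonempty_isCompact_isClosed hdir hne hcmp hcl
      have hbmem : ∀ s ∈ c, b ∈ s := fun s hs => hb s hs
      obtain ⟨s₀, hs₀⟩ := hcne
      have hbA : b ∈ A := by
        obtain ⟨a₀, ha₀, rfl⟩ := hcS hs₀
        rcases hclV a₀ ha₀ (hbmem _ hs₀) with h' | h'
        · exact hVsubA a₀ ha₀ h'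
        · exact h' ▸ ha₀
      refine ⟨closure (V b), ⟨b, hbA, rfl⟩, ?_⟩
      intro s hs
      obtain ⟨a, ha, rfl⟩ := hcS hs
      rcases hclV a ha (hbmem _ hs) with h' | h'
      · calc closure (V b) ⊆ V b ∪ {b} := hclV b hbA
          _ ⊆ V a := by
              rintro z (hz | hz)
              · exact ((hstep a ha b h') hz).1
              · exact hz ▸ h'
          _ ⊆ closure (V a) := subset_closure
      · rw [show b = a from h']
  obtain ⟨m, hm⟩ := hmin
  obtain ⟨a, haA, rfl⟩ := hm.prop
  obtain ⟨b, hbV⟩ := hVne a haA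
  have hbV : b ∈ V a := hbV
  have hbA : b ∈ A := hVsubA a haA hbV
  obtain ⟨c', hcV⟩ := hVne b hbA
  have hcV : c' ∈ V b := hcV
  have hc'A : c' ∈ A := hVsubA b hbA hcV
  have h1 : closure (V c') ⊆ V a \ {b} := by
    calc closure (V c') ⊆ V c' ∪ {c'} := hclV c' hc'A
      _ ⊆ V b := by
          rintro z (hz | hz)
          · exact ((hstep b hbA c' hcV) hz).1
          · exact hz ▸ hcV
      _ ⊆ V a \ {b} := hstep a haA b hbV
  have h2 : closure (V a) ⊆ closure (V c') :=
    hm.2 ⟨c', hc'A, rfl⟩ (h1.trans ((diff_subset).trans subset_closure))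
  have hbm : b ∈ closure (V a) := subset_closure hbV
  have : b ∈ V a \ {b} := h1 (h2 hbm)
  exact this.2 rfl

end Aux

/-- Every compact connected topological space with more than one point has at least two
non-cut points. -/
theorem stmt_19 {X : Type*} [TopologicalSpace X] [CompactSpace X] [ConnectedSpace X]
    [Nontrivial X] :
    ∃ x y : X, x ≠ y ∧ IsPreconnected ({x}ᶜ : Set X) ∧ IsPreconnected ({y}ᶜ : Set X) := by
  by_cases h : ∀ x : X, IsPreconnected ({x}ᶜ : Set X)
  · obtain ⟨x, y, hxy⟩ := exists_pair_ne X
    exact ⟨x, y, hxy, h x, h y⟩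
  · push_neg at h
    obtain ⟨x, hx⟩ := h
    rw [isPreconnected_iff_subset_of_disjoint] at hx
    push_neg at hx
    obtain ⟨u₀, v₀, hu₀, hv₀, hcov, hdis, hnu, hnv⟩ := hx
    have hA : (({x}ᶜ : Set X) ∩ u₀).Nonempty := by
      obtain ⟨z, hz, hz'⟩ := not_subset.mp hnv
      rcases hcov hz with h' | h'
      · exact ⟨z, hz, h'⟩
      · exact absurd h' hz'
    have hB : (({x}ᶜ : Set X) ∩ v₀).Nonempty := by
      obtain ⟨z, hz, hz'⟩ := not_subset.mp hnu
      rcases hcov hz with h' | h'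
      · exact absurd h' hz'
      · exact ⟨z, hz, h'⟩
    obtain ⟨a, ha, hconn_a⟩ := aux_main_s19 hu₀ hv₀ hcov hdis hA
    obtain ⟨b, hb, hconn_b⟩ := aux_main_s19 hv₀ hu₀ (by rwa [union_comm]) (by rwa [inter_comm v₀ u₀]) hB
    refine ⟨a, b, ?_, hconn_a, hconn_b⟩
    intro h
    subst h
    have : a ∈ ({x}ᶜ : Set X) ∩ (u₀ ∩ v₀) := ⟨ha.1, ha.2, hb.2⟩
    rw [hdis] at this
    exact this
end
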